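/- Let n ≥ 2 and let V be the ℂ-vector space with basis vectors e₃, e₅, …, e_{2n−1} (one basis vector e_{2i+1} for i = 1,…,n−1). For each composition (m₁,…,m_k) of n with k ≥ 2 and every m_j ≥ 1, let W be the ℂ-vector space with basis {e_{2i+1}^{(j)} : 1 ≤ j ≤ k, 1 ≤ i ≤ m_j − 1}, and let L : V → W be the linear map sending e_{2i+1} to Σ_j e_{2i+1}^{(j)}, the sum over those j with i ≤ m_j − 1; let ΛL : ΛV → ΛW be the induced map of exterior algebras. Then an element v ∈ ΛV satisfies ΛL(v) = 0 for every such composition if and only if v lies in the ideal of ΛV generated by e_{2n−1}. -/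
import Mathlib


/-- The generators of the exterior algebra on the space `Fin (n-1) → ℂ`:
`gen (n-1) t` is `ι` of the `t`-th standard basis vector (and `0` out of
range). The index `t` encodes the primitive generator `e_{2(t+1)+1}`, so that
`gen (n-1) 0, …, gen (n-1) (n-2)` are `e₃, e₅, …, e_{2n-1}`, the generators of
the cohomology of `SU(n)`. -/
noncomputable def gen (m t : ℕ) : ExteriorAlgebra ℂ (Fin m → ℂ) :=
  if h : t < m then ExteriorAlgebra.ι ℂ (Pi.single (⟨t, h⟩ : Fin m) 1) else 0

/-- For a composition `(m₁, …, m_k)` of `n`, the linear map `L : V → W` from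
the span `V` of `e₃, …, e_{2n-1}` to the span `W` of the generators
`e^{(j)}_{2i+1}` (`1 ≤ j ≤ k`, `1 ≤ i ≤ m_j - 1`, encoded by the index
`⟨j, i-1⟩ : Σ j : Fin k, Fin (m j - 1)`), sending `e_{2i+1}` to the sum of the
`e^{(j)}_{2i+1}` over those `j` with `i ≤ m_j - 1`. -/
noncomputable def L (n k : ℕ) (m : Fin k → ℕ) :
    (Fin (n - 1) → ℂ) →ₗ[ℂ] ((Σ j : Fin k, Fin (m j - 1)) → ℂ) where
  toFun v := fun p => if h : (p.2 : ℕ) < n - 1 then v ⟨(p.2 : ℕ), h⟩ else 0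
  map_add' u v := by
    funext p
    by_cases h : (p.2 : ℕ) < n - 1 <;> simp [h]
  map_smul' c v := by
    funext p
    by_cases h : (p.2 : ℕ) < n - 1 <;> simp [h]

/-- The composition `(n-1, 1)` of `n`. -/
noncomputable def mSplit (n : ℕ) : Fin 2 → ℕ := fun j => if j = 0 then n - 1 else 1

/-- A section of `L n 2 (mSplit n)`. -/
noncomputable def sec (n : ℕ) :
    ((Σ j : Fin 2, Fin (mSplit n j - 1)) → ℂ) →ₗ[ℂ] (Fin (n - 1) → ℂ) where
  toFun w t := if h : (t : ℕ) < n - 1 - 1 then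
      w ⟨0, ⟨(t : ℕ), by simpa [mSplit] using h⟩⟩ else 0
  map_add' u v := by funext t; by_cases h : (t : ℕ) < n - 1 - 1 <;> simp [h]
  map_smul' c v := by funext t; by_cases h : (t : ℕ) < n - 1 - 1 <;> simp [h]

lemma comm_aux {M : Type*} [AddCommGroup M] [Module ℂ M] (x : M)
    (b : ExteriorAlgebra ℂ M) :
    ∃ c, ExteriorAlgebra.ι ℂ x * b = c * ExteriorAlgebra.ι ℂ x := by
  induction b using ExteriorAlgebra.induction with
  | algebraMap r => exact ⟨algebraMap ℂ _ r, (Algebra.commutes r _).symm⟩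
  | ι u =>
    refine ⟨-ExteriorAlgebra.ι ℂ u, ?_⟩
    rw [neg_mul]
    exact eq_neg_of_add_eq_zero_left (ExteriorAlgebra.ι_add_mul_swap x u)
  | mul a b ha hb =>
    obtain ⟨ca, hca⟩ := ha; obtain ⟨cb, hcb⟩ := hb
    refine ⟨ca * cb, ?_⟩
    rw [← mul_assoc, hca, mul_assoc, hcb, ← mul_assoc]
  | add a b ha hb =>
    obtain ⟨ca, hca⟩ := ha; obtain ⟨cb, hcb⟩ := hb
    exact ⟨ca + cb, by rw [mul_add, hca, hcb, add_mul]⟩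

lemma mul_right_mem_aux {M : Type*} [AddCommGroup M] [Module ℂ M] (x : M)
    {a : ExteriorAlgebra ℂ M} (ha : a ∈ Ideal.span {ExteriorAlgebra.ι ℂ x})
    (b : ExteriorAlgebra ℂ M) :
    a * b ∈ Ideal.span {ExteriorAlgebra.ι ℂ x} := by
  obtain ⟨c, rfl⟩ := Ideal.mem_span_singleton'.mp ha
  obtain ⟨d, hd⟩ := comm_aux x b
  refine Ideal.mem_span_singleton'.mpr ⟨c * d, ?_⟩
  symm
  rw [mul_assoc, hd, ← mul_assoc]

set_option maxHeartbeats 1000000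

/-- (Section 3.1) An element `v` of the exterior algebra on `e₃, …, e_{2n-1}`
(the cohomology of `SU(n)`, compact dual for `R_{E/ℚ}(SL_n)`) restricts
trivially to the compact dual of every proper Levi subgroup — i.e. is killed
by the map of exterior algebras induced by `L` for every composition
`(m₁, …, m_k)` of `n` with `k ≥ 2` and all `m_j ≥ 1` — if and only if `v`
lies in the ideal generated by `e_{2n-1} = gen (n-1) (n-2)`. -/
theorem stmt_14 (n : ℕ) (hn : 2 ≤ n) (v : ExteriorAlgebra ℂ (Fin (n - 1) → ℂ)) :
    (∀ (k : ℕ), 2 ≤ k → ∀ (m : Fin k → ℕ), (∀ j, 1 ≤ m j) → ∑ j, m j = n →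
      ExteriorAlgebra.map (L n k m) v = 0) ↔
      v ∈ Ideal.span {gen (n - 1) (n - 2)} := by
  have hn2 : n - 2 < n - 1 := by omega
  set x : Fin (n - 1) → ℂ := Pi.single (⟨n - 2, hn2⟩ : Fin (n - 1)) 1 with hxdef
  have hg : gen (n - 1) (n - 2) = ExteriorAlgebra.ι ℂ x := by rw [gen, dif_pos hn2]
  rw [hg]
  constructor
  · intro h
    have hm1 : ∀ j, 1 ≤ mSplit n j := by
      intro j; fin_cases j <;> simp [mSplit] <;> omega
    have hsum : ∑ j, mSplit n j = n := by
      rw [Fin.sum_univ_two]; simp [mSplit]; omega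
    have h0 := h 2 le_rfl (mSplit n) hm1 hsum
    have hsec : ∀ u : Fin (n - 1) → ℂ,
        u - sec n ((L n 2 (mSplit n)) u) = u ⟨n - 2, hn2⟩ • x := by
      intro u; funext t
      have htlt : (t : ℕ) < n - 1 := t.isLt
      have hval : ((⟨n - 2, hn2⟩ : Fin (n - 1)) : ℕ) = n - 2 := rfl
      simp only [L, sec, LinearMap.coe_mk, AddHom.coe_mk, Pi.sub_apply, Pi.smul_apply,
        smul_eq_mul, hxdef, Pi.single_apply]
      by_cases h1 : (t : ℕ) < n - 1 - 1
      · rw [dif_pos h1, dif_pos (show (t : ℕ) < n - 1 from htlt)]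
        have hne : ¬ t = (⟨n - 2, hn2⟩ : Fin (n - 1)) := by
          intro hEq
          have : (t : ℕ) = n - 2 := congrArg Fin.val hEq
          omega
        rw [if_neg hne, mul_zero]
        simp
      · rw [dif_neg h1]
        have hteq : t = (⟨n - 2, hn2⟩ : Fin (n - 1)) := Fin.ext (by omega)
        rw [if_pos hteq, mul_one, sub_zero, hteq]
    set I := Ideal.span {ExteriorAlgebra.ι ℂ x} with hI
    set F := (ExteriorAlgebra.map (sec n)).comp
        (ExteriorAlgebra.map (L n 2 (mSplit n))) with hF
    have hkey : ∀ w : ExteriorAlgebra ℂ (Fin (n - 1) → ℂ), w - F w ∈ I := by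
      intro w
      induction w using ExteriorAlgebra.induction with
      | algebraMap r => rw [AlgHom.commutes, sub_self]; exact zero_mem _
      | ι u =>
        have : F (ExteriorAlgebra.ι ℂ u) =
            ExteriorAlgebra.ι ℂ (sec n ((L n 2 (mSplit n)) u)) := by
          rw [hF, AlgHom.comp_apply, ExteriorAlgebra.map_apply_ι,
            ExteriorAlgebra.map_apply_ι]
        rw [this, ← map_sub, hsec u, map_smul]
        exact Submodule.smul_of_tower_mem _ _
          (Ideal.mem_span_singleton_self _)
      | mul a b ha hb =>
        have e : a * b - F (a * b) = (a - F a) * b + F a * (b - F b) := by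
          rw [map_mul, sub_mul, mul_sub, sub_add_sub_cancel]
        rw [e]
        exact add_mem (mul_right_mem_aux x ha b) (Ideal.mul_mem_left _ _ hb)
      | add a b ha hb =>
        rw [map_add, add_sub_add_comm]
        exact add_mem ha hb
    have hFv : F v = 0 := by rw [hF, AlgHom.comp_apply, h0, map_zero]
    have := hkey v
    rwa [hFv, sub_zero] at this
  · intro hv k hk m hm1 hmsum
    have hmj : ∀ j : Fin k, m j ≤ n - 1 := by
      intro j
      have hk' : 1 < k := hk
      have hlt : (if (j : ℕ) = 0 then 1 else 0) < k := by split <;> omega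
      set j' : Fin k := ⟨if (j : ℕ) = 0 then 1 else 0, hlt⟩ with hj'
      have hne : (j : ℕ) ≠ (j' : ℕ) := by
        show (j : ℕ) ≠ (if (j : ℕ) = 0 then 1 else 0)
        split_ifs with h0 <;> omega
      have hpair : m j + m j' ≤ ∑ i, m i := by
        rw [← Finset.sum_pair (fun hEq => hne (congrArg Fin.val hEq))]
        exact Finset.sum_le_sum_of_subset (Finset.subset_univ _)
      rw [hmsum] at hpair
      have := hm1 j'
      omega
    have hLx : (L n k m) x = 0 := by
      funext p
      simp only [L, LinearMap.coe_mk, AddHom.coe_mk, Pi.zero_apply]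
      split_ifs with h
      · refine Pi.single_eq_of_ne (fun hEq => ?_) 1
        have h2 := p.2.isLt
        have h3 := hmj p.1
        have h4 : ((p.2 : ℕ)) = n - 2 := congrArg Fin.val hEq
        omega
      · rfl
    obtain ⟨c, rfl⟩ := Ideal.mem_span_singleton'.mp hv
    rw [map_mul, ExteriorAlgebra.map_apply_ι, hLx, map_zero, mul_zero]
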